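/- Let F_0 be a distribution function with F_0(0) = 0, F_0(M_1) = 1 and a continuous density f_0 on [0, M_1], and let F_E be a probability distribution concentrated on [ε, M_2] for some ε > 0. Let a ∈ L²(F_0) with ∫ a dF_0 = 0 and set φ(u) = ∫_{[0, u]} a dF_0, so that φ(0) = φ(M_1) = 0. Adopt the conventions φ(s) = φ(M_1), F_0(s) = 1 for s > M_1; φ(s) = F_0(s) = 0 for s < 0; and integrands equal to 0 where F_0(s) − F_0(s−e) = 0. If for every v ∈ [0, M_1], ∫ e^{-1} ∫_{s ∈ (v, v+e)} ( φ(s) − φ(s − e) ) / ( F_0(s) − F_0(s − e) ) ds dF_E(e) = v − ∫_0^{M_1} x dF_0(x), then ∫ e^{-1} ∫_ℝ ( φ(s) − φ(s − e) )² / ( F_0(s) − F_0(s − e) ) ds dF_E(e) = − ∫_0^{M_1} φ(u) du. -/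

import Mathlib

open MeasureTheory Filter Set
open scoped ENNReal NNReal

lemma auxCS {μ : Measure ℝ} (a : ℝ → ℝ) (ha : AEStronglyMeasurable a μ) (S : Set ℝ) :
    ∫⁻ x in S, ‖a x‖₊ ∂μ ≤ eLpNorm a 2 μ * (μ S) ^ (1/2 : ℝ) := by
  rw [show (∫⁻ x in S, (‖a x‖₊ : ℝ≥0∞) ∂μ) = eLpNorm a 1 (μ.restrict S) by
    rw [eLpNorm_one_eq_lintegral_enorm]; rfl]
  refine (eLpNorm_le_eLpNorm_mul_rpow_measure_univ (p := 1) (q := 2)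
    one_le_two ha.restrict).trans ?_
  rw [Measure.restrict_apply_univ]
  have : 1 / ENNReal.toReal 1 - 1 / ENNReal.toReal 2 = (1/2 : ℝ) := by norm_num
  rw [this]
  gcongr
  exact Measure.restrict_le_self

lemma auxCSreal {μ : Measure ℝ} [IsFiniteMeasure μ] (a : ℝ → ℝ) (ha : MemLp a 2 μ) (S : Set ℝ) :
    ∫ x in S, |a x| ∂μ ≤ (eLpNorm a 2 μ).toReal * Real.sqrt ((μ S).toReal) := by
  have h1 : ∫ x in S, |a x| ∂μ = (∫⁻ x in S, ‖a x‖₊ ∂μ).toReal := by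
    rw [integral_eq_lintegral_of_nonneg_ae (Eventually.of_forall fun x => abs_nonneg _)
      ha.1.norm.restrict]
    congr 1
    apply lintegral_congr fun x => ?_
    rw [← Real.norm_eq_abs, ofReal_norm]; rfl
  rw [h1]
  have h2 := auxCS a ha.1 S
  have h3 : eLpNorm a 2 μ * (μ S) ^ (1/2 : ℝ) ≠ ⊤ :=
    ENNReal.mul_ne_top ha.2.ne (by
      apply ENNReal.rpow_ne_top_of_nonneg (by norm_num) (measure_ne_top μ S))
  calc (∫⁻ x in S, ‖a x‖₊ ∂μ).toReal ≤ (eLpNorm a 2 μ * (μ S) ^ (1/2 : ℝ)).toReal :=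
        ENNReal.toReal_mono h3 h2
    _ = (eLpNorm a 2 μ).toReal * Real.sqrt ((μ S).toReal) := by
        rw [ENNReal.toReal_mul, ← ENNReal.toReal_rpow, Real.sqrt_eq_rpow]
set_option maxHeartbeats 1600000 in
theorem canonical_gradient_norm_mean_functional
    (M₁ M₂ ε : ℝ) (hM₁ : 0 < M₁) (hε : 0 < ε)
    (μ₀ : Measure ℝ) [IsProbabilityMeasure μ₀]
    (F0 f0 : ℝ → ℝ)
    (hF0 : ∀ x, F0 x = ∫ y in Set.Iic x, f0 y)
    (hf0cont : ContinuousOn f0 (Set.Icc 0 M₁))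
    (hf0supp : ∀ x, x ∉ Set.Icc 0 M₁ → f0 x = 0)
    (hμ₀F0 : ∀ x, (μ₀ (Set.Iic x)).toReal = F0 x)
    (hF00 : F0 0 = 0) (hF0M₁ : F0 M₁ = 1)
    (ν : Measure ℝ) [IsProbabilityMeasure ν] (hνsupp : ν (Set.Icc ε M₂)ᶜ = 0)
    (a : ℝ → ℝ) (ha : MemLp a 2 μ₀) (hamean : ∫ x, a x ∂μ₀ = 0)
    (φ : ℝ → ℝ) (hφ : ∀ u, φ u = ∫ v in Set.Icc 0 u, a v ∂μ₀)
    (heq : ∀ v ∈ Set.Icc (0 : ℝ) M₁,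
      (∫ e, e⁻¹ * (∫ s in Set.Ioo v (v + e), (φ s - φ (s - e)) / (F0 s - F0 (s - e))) ∂ν)
        = v - ∫ x in Set.Icc (0 : ℝ) M₁, x ∂μ₀) :
    (∫ e, e⁻¹ * (∫ s, (φ s - φ (s - e)) ^ 2 / (F0 s - F0 (s - e))) ∂ν)
      = - ∫ u in Set.Icc (0 : ℝ) M₁, φ u := by
  obtain ⟨b, hbsm, hab⟩ : ∃ b, StronglyMeasurable b ∧ a =ᵐ[μ₀] b :=
    ⟨ha.1.mk a, ha.1.stronglyMeasurable_mk, ha.1.ae_eq_mk⟩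
  have hbm : Measurable b := hbsm.measurable
  have hb2 : MemLp b 2 μ₀ := ha.ae_eq hab
  have hbint : Integrable b μ₀ := hb2.integrable one_le_two
  have hbmean : ∫ x, b x ∂μ₀ = 0 := by rw [← integral_congr_ae hab, hamean]
  set C := (eLpNorm b 2 μ₀).toReal with hCdef
  clear_value C
  have hC0 : 0 ≤ C := by rw [hCdef]; exact ENNReal.toReal_nonneg
  -- null sets
  have h0 : μ₀ (Iic 0) = 0 := by
    have := hμ₀F0 0
    rw [hF00] at this
    rcases ENNReal.toReal_eq_zero_iff _ |>.mp this with h | h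
    · exact h
    · exact absurd h (measure_ne_top _ _)
  have hM : μ₀ (Iic M₁) = 1 := by
    have := hμ₀F0 M₁
    rw [hF0M₁] at this
    exact (ENNReal.toReal_eq_one_iff _).mp this
  have hMc : μ₀ (Ioi M₁) = 0 := by
    have hcompl := measure_compl (measurableSet_Iic (a := M₁)) (measure_ne_top μ₀ _)
    rw [Set.compl_Iic, hM, measure_univ] at hcompl
    simp at hcompl
    exact hcompl
  have hae : ∀ᵐ v ∂μ₀, v ∈ Ioc 0 M₁ := by
    rw [ae_iff]
    refine measure_mono_null (fun v hv => ?_) (measure_union_null h0 hMc)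
    simp only [Set.mem_setOf_eq, Set.mem_Ioc, not_and_or, not_lt, not_le] at hv
    rcases hv with h | h
    · exact Or.inl h
    · exact Or.inr h
  -- F0 facts
  have hF0mono : Monotone F0 := by
    intro x y hxy
    rw [← hμ₀F0, ← hμ₀F0]
    exact ENNReal.toReal_mono (measure_ne_top _ _) (measure_mono (Set.Iic_subset_Iic.mpr hxy))
  have hF0nonneg : ∀ s, 0 ≤ F0 s := fun s => by rw [← hμ₀F0]; exact ENNReal.toReal_nonneg
  have hF0le1 : ∀ s, F0 s ≤ 1 := by
    intro s
    rw [← hμ₀F0]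
    have : μ₀ (Iic s) ≤ 1 := prob_le_one
    calc (μ₀ (Iic s)).toReal ≤ (1 : ℝ≥0∞).toReal :=
          ENNReal.toReal_mono ENNReal.one_ne_top this
      _ = 1 := by simp
  have hF0neg : ∀ s, s ≤ 0 → F0 s = 0 := fun s hs =>
    le_antisymm (hF00 ▸ hF0mono hs) (hF0nonneg s)
  have hF0one : ∀ s, M₁ ≤ s → F0 s = 1 := fun s hs =>
    le_antisymm (hF0le1 s) (hF0M₁ ▸ hF0mono hs)
  have hF0meas : Measurable F0 := hF0mono.measurable
  -- ψ
  set ψ : ℝ → ℝ := fun u => ∫ v in Iic u, b v ∂μ₀ with hψdef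
  clear_value ψ
  have hφeq : ∀ u, φ u = ψ u := by
    intro u
    rw [hφ u, hψdef]
    have h1 : ∫ v in Icc 0 u, a v ∂μ₀ = ∫ v in Icc 0 u, b v ∂μ₀ :=
      integral_congr_ae (ae_restrict_of_ae hab)
    rw [h1]
    refine setIntegral_congr_set (MeasureTheory.ae_eq_set.mpr ⟨?_, ?_⟩)
    · rw [Set.diff_eq_empty.mpr (fun v hv => hv.2)]
      exact measure_empty
    · refine measure_mono_null (fun v hv => ?_) h0
      simp only [Set.mem_diff, Set.mem_Iic, Set.mem_Icc, not_and_or, not_le] at hv ⊢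
      rcases hv.2 with h | h
      · linarith
      · linarith [hv.1]
  simp only [hφeq] at heq ⊢
  have hψIoc : ∀ x y : ℝ, x ≤ y → ∫ v in Ioc x y, b v ∂μ₀ = ψ y - ψ x := by
    intro x y hxy
    have hu : Iic x ∪ Ioc x y = Iic y := Set.Iic_union_Ioc_eq_Iic hxy
    have := setIntegral_union (s := Iic x) (t := Ioc x y) (Set.Iic_disjoint_Ioc le_rfl)
      measurableSet_Ioc hbint.integrableOn hbint.integrableOn (f := b) (μ := μ₀)
    rw [hu] at this
    simp only [hψdef]
    rw [this]
    ring
  set P : ℝ → ℝ := fun u => ∫ v in Iic u, |b v| ∂μ₀ with hPdef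
  clear_value P
  have hPIoc : ∀ x y : ℝ, x ≤ y → ∫ v in Ioc x y, |b v| ∂μ₀ = P y - P x := by
    intro x y hxy
    have hu : Iic x ∪ Ioc x y = Iic y := Set.Iic_union_Ioc_eq_Iic hxy
    have := setIntegral_union (s := Iic x) (t := Ioc x y) (Set.Iic_disjoint_Ioc le_rfl)
      measurableSet_Ioc hbint.abs.integrableOn hbint.abs.integrableOn
      (f := fun v => |b v|) (μ := μ₀)
    rw [hu] at this
    simp only [hPdef]
    rw [this]
    ring
  have hPmono : Monotone P := by
    intro x y hxy
    simp only [hPdef]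
    refine setIntegral_mono_set hbint.abs.integrableOn
      (Eventually.of_forall fun v => abs_nonneg _)
      (HasSubset.Subset.eventuallyLE (Set.Iic_subset_Iic.mpr hxy))
  have hψmeas : Measurable ψ := by
    have hQmono : Monotone (fun u => ∫ v in Iic u, (|b v| + b v) ∂μ₀) := by
      intro x y hxy
      refine setIntegral_mono_set ((hbint.abs.add hbint).integrableOn)
        (Eventually.of_forall fun v => by simp only [Pi.zero_apply]; linarith [abs_nonneg (b v), neg_abs_le (b v)])
        (HasSubset.Subset.eventuallyLE (Set.Iic_subset_Iic.mpr hxy))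
    have hdiff : ψ = fun u => (∫ v in Iic u, (|b v| + b v) ∂μ₀) - P u := by
      funext u
      simp only [hψdef, hPdef]
      rw [integral_add hbint.abs.integrableOn hbint.integrableOn]
      ring
    rw [hdiff]
    exact hQmono.measurable.sub hPmono.measurable
  have hD : ∀ s e : ℝ, 0 < e → (μ₀ (Ioc (s-e) s)).toReal = F0 s - F0 (s-e) := by
    intro s e he
    have hu : Iic (s-e) ∪ Ioc (s-e) s = Iic s := Set.Iic_union_Ioc_eq_Iic (by linarith)
    have hm2 : μ₀ (Iic s) = μ₀ (Iic (s-e)) + μ₀ (Ioc (s-e) s) := by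
      rw [← hu, measure_union (Set.Iic_disjoint_Ioc le_rfl) measurableSet_Ioc]
    rw [← hμ₀F0, ← hμ₀F0, hm2, ENNReal.toReal_add (measure_ne_top _ _) (measure_ne_top _ _)]
    ring
  have hDnn : ∀ s e : ℝ, 0 < e → 0 ≤ F0 s - F0 (s-e) := fun s e he =>
    sub_nonneg.mpr (hF0mono (by linarith))
  have hCSP : ∀ s e : ℝ, 0 < e →
      ∫ v in Ioc (s-e) s, |b v| ∂μ₀ ≤ C * Real.sqrt (F0 s - F0 (s-e)) := by
    intro s e he
    have h2 := auxCSreal b hb2 (Ioc (s-e) s)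
    rw [hD s e he] at h2
    rw [hCdef]
    exact h2
  have hCSψ : ∀ s e : ℝ, 0 < e → |ψ s - ψ (s-e)| ≤ C * Real.sqrt (F0 s - F0 (s-e)) := by
    intro s e he
    rw [← hψIoc (s-e) s (by linarith)]
    have h1 : |∫ v in Ioc (s-e) s, b v ∂μ₀| ≤ ∫ v in Ioc (s-e) s, |b v| ∂μ₀ := by
      simpa [Real.norm_eq_abs] using
        norm_integral_le_integral_norm (μ := μ₀.restrict (Ioc (s-e) s)) b
    exact h1.trans (hCSP s e he)
  set g : ℝ → ℝ → ℝ := fun e s => (ψ s - ψ (s-e)) / (F0 s - F0 (s-e)) with hgdef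
  clear_value g
  have hgm : Measurable (fun p : ℝ × ℝ => g p.1 p.2) := by
    simp only [hgdef]
    exact ((hψmeas.comp measurable_snd).sub
        (hψmeas.comp (measurable_snd.sub measurable_fst))).div
      ((hF0meas.comp measurable_snd).sub
        (hF0meas.comp (measurable_snd.sub measurable_fst)))
  have hgem : ∀ e : ℝ, Measurable (g e) := by
    intro e
    simp only [hgdef]
    exact (hψmeas.sub (hψmeas.comp (measurable_id.sub measurable_const))).div
      (hF0meas.sub (hF0meas.comp (measurable_id.sub measurable_const)))
  have hkey : ∀ e s : ℝ, 0 < e → |g e s| * (C * Real.sqrt (F0 s - F0 (s-e)))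
      ≤ (Icc 0 (M₁+e)).indicator (fun _ => C^2) s := by
    intro e s he
    have hind : 0 ≤ (Icc 0 (M₁+e)).indicator (fun _ : ℝ => C^2) s :=
      Set.indicator_nonneg (fun _ _ => sq_nonneg C) s
    rcases eq_or_lt_of_le (hDnn s e he) with hD0 | hDpos
    · rw [← hD0, Real.sqrt_zero, mul_zero, mul_zero]
      exact hind
    · have hmem : s ∈ Icc 0 (M₁ + e) := by
        constructor
        · by_contra hc
          push_neg at hc
          have := hF0neg s hc.le
          have h2 := hF0nonneg (s - e)
          linarith
        · by_contra hc
          push_neg at hc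
          have := hF0one (s - e) (by linarith)
          have h2 := hF0le1 s
          linarith
      rw [Set.indicator_of_mem hmem]
      have hgle : |g e s| ≤ C * Real.sqrt (F0 s - F0 (s-e)) / (F0 s - F0 (s-e)) := by
        simp only [hgdef]
        rw [abs_div, abs_of_pos hDpos]
        exact (div_le_div_iff_of_pos_right hDpos).mpr (hCSψ s e he)
      calc |g e s| * (C * Real.sqrt (F0 s - F0 (s-e)))
          ≤ (C * Real.sqrt (F0 s - F0 (s-e)) / (F0 s - F0 (s-e)))
              * (C * Real.sqrt (F0 s - F0 (s-e))) :=
            mul_le_mul_of_nonneg_right hgle (by positivity)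
        _ = (C * C) * (Real.sqrt (F0 s - F0 (s-e)) * Real.sqrt (F0 s - F0 (s-e)))
              / (F0 s - F0 (s-e)) := by ring
        _ = C ^ 2 := by
            rw [Real.mul_self_sqrt (hDnn s e he), mul_div_assoc, div_self hDpos.ne',
              mul_one, sq]
  set J : ℝ → ℝ → ℝ := fun e v => ∫ s in Ioo v (v+e), g e s with hJdef
  clear_value J
  have hJm : Measurable (fun p : ℝ × ℝ => J p.1 p.2) := by
    have hfm : Measurable (fun q : (ℝ × ℝ) × ℝ =>
        if q.1.2 < q.2 ∧ q.2 < q.1.2 + q.1.1 then g q.1.1 q.2 else 0) := by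
      refine Measurable.ite ?_ ?_ measurable_const
      · exact (measurableSet_lt measurable_fst.snd measurable_snd).inter
          (measurableSet_lt measurable_snd (measurable_fst.snd.add measurable_fst.fst))
      · exact hgm.comp (measurable_fst.fst.prodMk measurable_snd)
    have h2 : (fun p : ℝ × ℝ => J p.1 p.2) = fun p : ℝ × ℝ =>
        ∫ s, (if p.2 < s ∧ s < p.2 + p.1 then g p.1 s else 0) := by
      funext p
      simp only [hJdef]
      rw [← integral_indicator measurableSet_Ioo]
      congr 1
      funext s
      simp [Set.indicator_apply, Set.mem_Ioo]
    rw [h2]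
    exact (hfm.stronglyMeasurable.integral_prod_right' (ν := volume)).measurable
  have stepA : ∀ e : ℝ, 0 < e →
      (∫ s, (ψ s - ψ (s-e))^2 / (F0 s - F0 (s-e))) = ∫ v, b v * J e v ∂μ₀ := by
    intro e he
    have hse : ∀ s : ℝ, s - e ≤ s := fun s => by linarith
    set f : ℝ → ℝ → ℝ := fun s v => g e s * (Ioc (s - e) s).indicator b v with hfdef
    have hfmeas : AEStronglyMeasurable (Function.uncurry f) (volume.prod μ₀) := by
      apply Measurable.aestronglyMeasurable
      have : Function.uncurry f = fun p : ℝ × ℝ =>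
          g e p.1 * (if p.1 - e < p.2 ∧ p.2 ≤ p.1 then b p.2 else 0) := by
        funext p
        simp [hfdef, Function.uncurry, Set.indicator_apply, Set.mem_Ioc]
      rw [this]
      exact ((hgem e).comp measurable_fst).mul
        (Measurable.ite ((measurableSet_lt (measurable_fst.sub measurable_const)
            measurable_snd).inter (measurableSet_le measurable_snd measurable_fst))
          (hbm.comp measurable_snd) measurable_const)
    have hnorm : ∀ s, (∫ v, ‖f s v‖ ∂μ₀) = |g e s| * (P s - P (s-e)) := by
      intro s
      rw [← hPIoc (s-e) s (hse s)]
      calc ∫ v, ‖f s v‖ ∂μ₀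
          = ∫ v, |g e s| * (Ioc (s-e) s).indicator (fun v => |b v|) v ∂μ₀ := by
            congr 1; funext v
            simp only [hfdef, Real.norm_eq_abs, abs_mul]
            congr 1
            by_cases hv : v ∈ Ioc (s-e) s <;> simp [Set.indicator_apply, hv]
        _ = |g e s| * ∫ v, (Ioc (s-e) s).indicator (fun v => |b v|) v ∂μ₀ :=
            integral_const_mul _ _
        _ = |g e s| * ∫ v in Ioc (s-e) s, |b v| ∂μ₀ := by
            rw [integral_indicator measurableSet_Ioc]
    have hintf : Integrable (Function.uncurry f) (volume.prod μ₀) := by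
      rw [integrable_prod_iff hfmeas]
      simp only [Function.uncurry_apply_pair]
      constructor
      · exact Eventually.of_forall fun s => (hbint.indicator measurableSet_Ioc).const_mul _
      · have hmeas2 : Measurable fun s => |g e s| * (P s - P (s - e)) :=
          (hgem e).abs.mul (hPmono.measurable.sub
            (hPmono.measurable.comp (measurable_id.sub measurable_const)))
        have hbound : ∀ s, ‖|g e s| * (P s - P (s - e))‖
            ≤ (Icc 0 (M₁+e)).indicator (fun _ => C^2) s := by
          intro s
          rw [Real.norm_eq_abs, abs_mul, abs_abs]
          have hP0 : 0 ≤ P s - P (s-e) := sub_nonneg.mpr (hPmono (hse s))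
          rw [abs_of_nonneg hP0]
          refine le_trans (mul_le_mul_of_nonneg_left ?_ (abs_nonneg _)) (hkey e s he)
          rw [← hPIoc (s-e) s (hse s)]
          exact hCSP s e he
        simp only [hnorm]
        refine Integrable.mono' ?_ hmeas2.aestronglyMeasurable (Eventually.of_forall hbound)
        rw [integrable_indicator_iff measurableSet_Icc]
        exact integrableOn_const measure_Icc_lt_top.ne
    calc (∫ s, (ψ s - ψ (s-e))^2 / (F0 s - F0 (s-e)))
        = ∫ s, ∫ v, f s v ∂μ₀ := by
          congr 1; funext s
          simp only [hfdef]
          rw [integral_const_mul, integral_indicator measurableSet_Ioc,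
            hψIoc (s-e) s (hse s)]
          simp only [hgdef]
          ring
      _ = ∫ v, (∫ s, f s v) ∂μ₀ := integral_integral_swap hintf
      _ = ∫ v, b v * J e v ∂μ₀ := by
          congr 1; funext v
          have h1 : ∀ s, f s v = (Ico v (v+e)).indicator (fun s => g e s * b v) s := by
            intro s
            simp only [hfdef, Set.indicator_apply, Set.mem_Ioc, Set.mem_Ico]
            by_cases hv : s - e < v ∧ v ≤ s
            · rw [if_pos hv, if_pos ⟨hv.2, by linarith [hv.1]⟩]
            · rw [if_neg hv, if_neg ?_, mul_zero]
              intro hc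
              exact hv ⟨by linarith [hc.2], hc.1⟩
          simp only [h1]
          rw [integral_indicator measurableSet_Ico, integral_Ico_eq_integral_Ioo,
            integral_mul_const]
          simp only [hJdef]
          rw [mul_comm]
  have hνae : ∀ᵐ e ∂ν, e ∈ Icc ε M₂ := mem_ae_iff.mpr hνsupp
  set m := ∫ x in Icc (0:ℝ) M₁, x ∂μ₀ with hmdef
  clear_value m
  have hInt : Integrable (Function.uncurry fun e v => e⁻¹ * (b v * J e v)) (ν.prod μ₀) := by
    have hHm : Measurable (fun p : ℝ × ℝ => p.1⁻¹ * (b p.2 * J p.1 p.2)) :=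
      (measurable_fst.inv).mul ((hbm.comp measurable_snd).mul hJm)
    have hnn : Measurable (fun p : ℝ × ℝ => (‖p.1⁻¹ * (b p.2 * J p.1 p.2)‖₊ : ℝ≥0∞)) :=
      hHm.enorm
    have hbnd : ∀ e ∈ Icc ε M₂, (∫⁻ v, (‖e⁻¹ * (b v * J e v)‖₊ : ℝ≥0∞) ∂μ₀)
        ≤ ENNReal.ofReal (ε⁻¹ * (C^2 * (M₁ + M₂))) := by
      intro e he
      have he0 : 0 < e := lt_of_lt_of_le hε he.1
      have hIm : Measurable (fun q : ℝ × ℝ =>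
          if q.1 < q.2 ∧ q.2 < q.1 + e then (‖g e q.2‖₊ : ℝ≥0∞) else 0) :=
        Measurable.ite ((measurableSet_lt measurable_fst measurable_snd).inter
            (measurableSet_lt measurable_snd (measurable_fst.add_const e)))
          ((hgem e).enorm.comp measurable_snd) measurable_const
      have hindeq : ∀ v s : ℝ, (Ioo v (v+e)).indicator (fun s => (‖g e s‖₊ : ℝ≥0∞)) s
          = if v < s ∧ s < v + e then (‖g e s‖₊ : ℝ≥0∞) else 0 := by
        intro v s
        simp [Set.indicator_apply, Set.mem_Ioo]
      have hLmeas : Measurable (fun v => ∫⁻ s in Ioo v (v+e), (‖g e s‖₊ : ℝ≥0∞)) := by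
        have h2 : (fun v => ∫⁻ s in Ioo v (v+e), (‖g e s‖₊ : ℝ≥0∞))
            = fun v => ∫⁻ s, (if v < s ∧ s < v + e then (‖g e s‖₊ : ℝ≥0∞) else 0) := by
          funext v
          rw [← lintegral_indicator measurableSet_Ioo]
          exact lintegral_congr fun s => (hindeq v s)
        rw [h2]
        exact Measurable.lintegral_prod_right' (f := fun q : ℝ × ℝ =>
          if q.1 < q.2 ∧ q.2 < q.1 + e then (‖g e q.2‖₊ : ℝ≥0∞) else 0) hIm
      have step1 : ∀ v, (‖e⁻¹ * (b v * J e v)‖₊ : ℝ≥0∞)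
          ≤ ENNReal.ofReal ε⁻¹
            * ((‖b v‖₊ : ℝ≥0∞) * ∫⁻ s in Ioo v (v+e), (‖g e s‖₊ : ℝ≥0∞)) := by
        intro v
        rw [nnnorm_mul, nnnorm_mul, ENNReal.coe_mul, ENNReal.coe_mul]
        refine mul_le_mul' ?_ (mul_le_mul' le_rfl ?_)
        · rw [show (‖e⁻¹‖₊ : ℝ≥0∞) = ENNReal.ofReal e⁻¹ from Real.enorm_eq_ofReal (inv_nonneg.mpr he0.le)]
          exact ENNReal.ofReal_le_ofReal (by
            apply inv_anti₀ hε he.1)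
        · have h3 : J e v = ∫ s in Ioo v (v+e), g e s := by simp only [hJdef]
          rw [h3]
          exact enorm_integral_le_lintegral_enorm _
      have hkey2 : ∀ s : ℝ, (∫⁻ v in Ioo (s-e) s, (‖b v‖₊ : ℝ≥0∞) ∂μ₀) * (‖g e s‖₊ : ℝ≥0∞)
          ≤ (Icc 0 (M₁+e)).indicator (fun _ => ENNReal.ofReal (C^2)) s := by
        intro s
        have h5 : (∫⁻ v in Ioo (s-e) s, (‖b v‖₊ : ℝ≥0∞) ∂μ₀)
            ≤ ENNReal.ofReal (C * Real.sqrt (F0 s - F0 (s-e))) := by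
          refine le_trans (lintegral_mono_set Set.Ioo_subset_Ioc_self) ?_
          have h6 : (∫⁻ v in Ioc (s-e) s, (‖b v‖₊ : ℝ≥0∞) ∂μ₀)
              = ENNReal.ofReal (∫ v in Ioc (s-e) s, |b v| ∂μ₀) := by
            rw [ofReal_integral_eq_lintegral_ofReal hbint.abs.integrableOn
              (Eventually.of_forall fun v => abs_nonneg _)]
            exact lintegral_congr fun v => Real.enorm_eq_ofReal_abs (b v)
          rw [h6]
          exact ENNReal.ofReal_le_ofReal (hCSP s e he0)
        calc (∫⁻ v in Ioo (s-e) s, (‖b v‖₊ : ℝ≥0∞) ∂μ₀) * (‖g e s‖₊ : ℝ≥0∞)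
            ≤ ENNReal.ofReal (C * Real.sqrt (F0 s - F0 (s-e)))
                * ENNReal.ofReal |g e s| := by
              rw [show (‖g e s‖₊ : ℝ≥0∞) = ENNReal.ofReal |g e s| from Real.enorm_eq_ofReal_abs _]
              exact mul_le_mul' h5 le_rfl
          _ = ENNReal.ofReal (|g e s| * (C * Real.sqrt (F0 s - F0 (s-e)))) := by
              rw [← ENNReal.ofReal_mul (by positivity), mul_comm]
          _ ≤ (Icc 0 (M₁+e)).indicator (fun _ => ENNReal.ofReal (C^2)) s := by
              by_cases hmem : s ∈ Icc 0 (M₁+e)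
              · rw [Set.indicator_of_mem hmem]
                refine ENNReal.ofReal_le_ofReal ?_
                have h7 := hkey e s he0
                rwa [Set.indicator_of_mem hmem] at h7
              · rw [Set.indicator_of_notMem hmem]
                have h7 := hkey e s he0
                rw [Set.indicator_of_notMem hmem] at h7
                have h8 : |g e s| * (C * Real.sqrt (F0 s - F0 (s-e))) = 0 :=
                  le_antisymm h7 (by positivity)
                rw [h8]
                simp
      have hFm : Measurable (Function.uncurry fun v s =>
          (‖b v‖₊ : ℝ≥0∞) * (Ioo v (v+e)).indicator (fun s => (‖g e s‖₊ : ℝ≥0∞)) s) := by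
        have h2 : (Function.uncurry fun v s =>
            (‖b v‖₊ : ℝ≥0∞) * (Ioo v (v+e)).indicator (fun s => (‖g e s‖₊ : ℝ≥0∞)) s)
            = fun q : ℝ × ℝ => (‖b q.1‖₊ : ℝ≥0∞)
              * (if q.1 < q.2 ∧ q.2 < q.1 + e then (‖g e q.2‖₊ : ℝ≥0∞) else 0) := by
          funext q
          obtain ⟨v, s⟩ := q
          simp only [Function.uncurry_apply_pair, hindeq]
        rw [h2]
        exact (hbm.enorm.comp measurable_fst).mul hIm
      have hTon : ∫⁻ v, (‖b v‖₊ : ℝ≥0∞) * (∫⁻ s in Ioo v (v+e), (‖g e s‖₊ : ℝ≥0∞)) ∂μ₀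
          ≤ ENNReal.ofReal (C^2 * (M₁ + M₂)) := by
        calc ∫⁻ v, (‖b v‖₊ : ℝ≥0∞) * (∫⁻ s in Ioo v (v+e), (‖g e s‖₊ : ℝ≥0∞)) ∂μ₀
            = ∫⁻ v, (∫⁻ s, (‖b v‖₊ : ℝ≥0∞)
                * (Ioo v (v+e)).indicator (fun s => (‖g e s‖₊ : ℝ≥0∞)) s) ∂μ₀ := by
              refine lintegral_congr fun v => ?_
              rw [lintegral_const_mul (f := (Ioo v (v+e)).indicator (fun s => (‖g e s‖₊ : ℝ≥0∞))) _ ((hgem e).enorm.indicator (measurableSet_Ioo : MeasurableSet (Ioo v (v+e))))]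
              congr 1
              exact (lintegral_indicator (measurableSet_Ioo : MeasurableSet (Ioo v (v+e)))
                (fun s => (‖g e s‖₊ : ℝ≥0∞))).symm
          _ = ∫⁻ s, ∫⁻ v, (‖b v‖₊ : ℝ≥0∞)
                * (Ioo v (v+e)).indicator (fun s => (‖g e s‖₊ : ℝ≥0∞)) s ∂μ₀ :=
              lintegral_lintegral_swap hFm.aemeasurable
          _ = ∫⁻ s, (∫⁻ v in Ioo (s-e) s, (‖b v‖₊ : ℝ≥0∞) ∂μ₀) * (‖g e s‖₊ : ℝ≥0∞) := by
              refine lintegral_congr fun s => ?_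
              have h11 : ∀ v : ℝ, (‖b v‖₊ : ℝ≥0∞)
                  * (Ioo v (v+e)).indicator (fun s => (‖g e s‖₊ : ℝ≥0∞)) s
                  = (Ioo (s-e) s).indicator (fun v => (‖b v‖₊ : ℝ≥0∞)) v
                    * (‖g e s‖₊ : ℝ≥0∞) := by
                intro v
                have hiff : (v < s ∧ s < v + e) ↔ (s - e < v ∧ v < s) := by
                  constructor <;> rintro ⟨h12, h13⟩ <;> exact ⟨by linarith, by linarith⟩
                simp only [Set.indicator_apply, Set.mem_Ioo]
                by_cases h14 : v < s ∧ s < v + e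
                · rw [if_pos h14, if_pos (hiff.mp h14), mul_comm]
                · rw [if_neg h14, if_neg (fun hc => h14 (hiff.mpr hc)), mul_zero, zero_mul]
              simp only [h11]
              rw [lintegral_mul_const (f := (Ioo (s-e) s).indicator (fun v => (‖b v‖₊ : ℝ≥0∞))) _ (hbm.enorm.indicator (measurableSet_Ioo : MeasurableSet (Ioo (s-e) s)))]
              congr 1
              exact lintegral_indicator (measurableSet_Ioo : MeasurableSet (Ioo (s-e) s))
                (fun v => (‖b v‖₊ : ℝ≥0∞))
          _ ≤ ∫⁻ s, (Icc 0 (M₁+e)).indicator (fun _ => ENNReal.ofReal (C^2)) s :=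
              lintegral_mono hkey2
          _ = ENNReal.ofReal (C^2) * volume (Icc 0 (M₁+e)) := by
              rw [lintegral_indicator measurableSet_Icc, setLIntegral_const]
          _ ≤ ENNReal.ofReal (C^2) * ENNReal.ofReal (M₁ + M₂) := by
              rw [Real.volume_Icc]
              exact mul_le_mul' le_rfl (ENNReal.ofReal_le_ofReal (by linarith [he.2]))
          _ = ENNReal.ofReal (C^2 * (M₁ + M₂)) := by
              rw [← ENNReal.ofReal_mul (by positivity)]
      calc ∫⁻ v, (‖e⁻¹ * (b v * J e v)‖₊ : ℝ≥0∞) ∂μ₀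
          ≤ ∫⁻ v, ENNReal.ofReal ε⁻¹
              * ((‖b v‖₊ : ℝ≥0∞) * ∫⁻ s in Ioo v (v+e), (‖g e s‖₊ : ℝ≥0∞)) ∂μ₀ :=
            lintegral_mono step1
        _ = ENNReal.ofReal ε⁻¹
              * ∫⁻ v, (‖b v‖₊ : ℝ≥0∞) * (∫⁻ s in Ioo v (v+e), (‖g e s‖₊ : ℝ≥0∞)) ∂μ₀ :=
            lintegral_const_mul _ (hbm.enorm.mul hLmeas)
        _ ≤ ENNReal.ofReal ε⁻¹ * ENNReal.ofReal (C^2 * (M₁ + M₂)) := mul_le_mul' le_rfl hTon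
        _ = ENNReal.ofReal (ε⁻¹ * (C^2 * (M₁ + M₂))) := by
            rw [← ENNReal.ofReal_mul (inv_nonneg.mpr hε.le)]
    refine ⟨hHm.aestronglyMeasurable, ?_⟩
    have h10 : (∫⁻ p : ℝ × ℝ, (‖p.1⁻¹ * (b p.2 * J p.1 p.2)‖₊ : ℝ≥0∞) ∂(ν.prod μ₀)) < ⊤ := by
      refine lt_of_le_of_lt (le_of_eq (lintegral_prod _ hnn.aemeasurable)) ?_
      have hb2' : ∀ᵐ (e : ℝ) ∂ν,
          (∫⁻ v, (‖(e, v).1⁻¹ * (b (e, v).2 * J (e, v).1 (e, v).2)‖₊ : ℝ≥0∞) ∂μ₀)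
            ≤ ENNReal.ofReal (ε⁻¹ * (C^2 * (M₁ + M₂))) :=
        hνae.mono fun e he => by simpa using hbnd e he
      refine lt_of_le_of_lt (lintegral_mono_ae hb2') ?_
      rw [lintegral_const, measure_univ, mul_one]
      exact ENNReal.ofReal_lt_top
    exact h10
  have hbv : Integrable (fun v => b v * v) μ₀ := by
    refine Integrable.mono' (hbint.abs.const_mul M₁)
      ((hbm.mul measurable_id).aestronglyMeasurable) (hae.mono fun v hv => ?_)
    rw [Real.norm_eq_abs, abs_mul]
    calc |b v| * |v| ≤ |b v| * M₁ := by
          refine mul_le_mul_of_nonneg_left ?_ (abs_nonneg _)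
          rw [abs_of_pos hv.1]
          exact hv.2
      _ = M₁ * |b v| := mul_comm _ _
  have stepB : (∫ e, e⁻¹ * (∫ s, (ψ s - ψ (s-e))^2 / (F0 s - F0 (s-e))) ∂ν)
      = ∫ v, b v * (v - m) ∂μ₀ := by
    have heq' : ∀ v, v ∈ Ioc 0 M₁ → (∫ e, e⁻¹ * J e v ∂ν) = v - m := by
      intro v hv
      have h2 := heq v ⟨hv.1.le, hv.2⟩
      rw [← h2]
      congr 1
      funext e
      congr 1
      simp only [hJdef, hgdef]
    calc (∫ e, e⁻¹ * (∫ s, (ψ s - ψ (s-e))^2 / (F0 s - F0 (s-e))) ∂ν)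
        = ∫ e, e⁻¹ * (∫ v, b v * J e v ∂μ₀) ∂ν := by
          refine integral_congr_ae (hνae.mono fun e he => ?_)
          dsimp only
          rw [stepA e (lt_of_lt_of_le hε he.1)]
      _ = ∫ e, (∫ v, e⁻¹ * (b v * J e v) ∂μ₀) ∂ν := by
          congr 1
          funext e
          rw [integral_const_mul]
      _ = ∫ v, (∫ e, e⁻¹ * (b v * J e v) ∂ν) ∂μ₀ := integral_integral_swap hInt
      _ = ∫ v, b v * (∫ e, e⁻¹ * J e v ∂ν) ∂μ₀ := by
          congr 1
          funext v
          rw [← integral_const_mul]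
          congr 1
          funext e
          ring
      _ = ∫ v, b v * (v - m) ∂μ₀ := by
          refine integral_congr_ae (hae.mono fun v hv => ?_)
          dsimp only
          rw [heq' v hv]
  have stepB2 : ∫ v, b v * (v - m) ∂μ₀ = ∫ v, b v * v ∂μ₀ := by
    calc ∫ v, b v * (v - m) ∂μ₀ = ∫ v, (b v * v - b v * m) ∂μ₀ := by
          congr 1
          funext v
          ring
      _ = (∫ v, b v * v ∂μ₀) - ∫ v, b v * m ∂μ₀ := integral_sub hbv (hbint.mul_const m)
      _ = ∫ v, b v * v ∂μ₀ := by rw [integral_mul_const, hbmean, zero_mul, sub_zero]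
  have stepC : ∫ v, b v * v ∂μ₀ = - ∫ u in Icc (0:ℝ) M₁, ψ u := by
    have hkint : Integrable (Function.uncurry fun u v => (Iic u).indicator b v)
        ((volume.restrict (Icc (0:ℝ) M₁)).prod μ₀) := by
      have hmeas : Measurable (Function.uncurry fun u v => (Iic u).indicator b v) := by
        have h5 : (Function.uncurry fun u v => (Iic u).indicator b v)
            = fun p : ℝ × ℝ => if p.2 ≤ p.1 then b p.2 else 0 := by
          funext p
          simp [Function.uncurry, Set.indicator_apply]
        rw [h5]
        exact Measurable.ite (measurableSet_le measurable_snd measurable_fst)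
          (hbm.comp measurable_snd) measurable_const
      rw [integrable_prod_iff hmeas.aestronglyMeasurable]
      simp only [Function.uncurry_apply_pair]
      constructor
      · exact Eventually.of_forall fun u => hbint.indicator measurableSet_Iic
      · have heqn : ∀ u : ℝ, (∫ v, ‖(Iic u).indicator b v‖ ∂μ₀) = P u := by
          intro u
          rw [hPdef]
          simp only []
          rw [← integral_indicator measurableSet_Iic]
          congr 1
          funext v
          by_cases hv : v ∈ Iic u <;> simp [Set.indicator_apply, hv, Real.norm_eq_abs]
        simp only [heqn]
        refine Integrable.mono' (integrable_const (∫ v, |b v| ∂μ₀))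
          hPmono.measurable.aestronglyMeasurable (Eventually.of_forall fun u => ?_)
        rw [Real.norm_eq_abs]
        have hPnn : 0 ≤ P u := by
          rw [hPdef]
          exact setIntegral_nonneg measurableSet_Iic fun v _ => abs_nonneg _
        rw [abs_of_nonneg hPnn, hPdef]
        exact setIntegral_le_integral hbint.abs (Eventually.of_forall fun v => abs_nonneg _)
    have h1 : ∫ u in Icc (0:ℝ) M₁, ψ u = ∫ v, b v * (M₁ - v) ∂μ₀ := by
      calc ∫ u in Icc (0:ℝ) M₁, ψ u
          = ∫ u in Icc (0:ℝ) M₁, (∫ v, (Iic u).indicator b v ∂μ₀) := by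
            refine setIntegral_congr_fun measurableSet_Icc fun u _ => ?_
            rw [integral_indicator measurableSet_Iic]
            exact congrFun hψdef u
        _ = ∫ v, (∫ u in Icc (0:ℝ) M₁, (Iic u).indicator b v) ∂μ₀ :=
            integral_integral_swap hkint
        _ = ∫ v, b v * (M₁ - v) ∂μ₀ := by
            refine integral_congr_ae (hae.mono fun v hv => ?_)
            have h2 : ∀ u : ℝ, (Iic u).indicator b v = (Ici v).indicator (fun _ => b v) u := by
              intro u
              simp [Set.indicator_apply, Set.mem_Iic, Set.mem_Ici]
            simp only [h2]
            rw [setIntegral_indicator measurableSet_Ici, setIntegral_const]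
            have h3 : Icc (0:ℝ) M₁ ∩ Ici v = Icc v M₁ := by
              ext u
              simp only [Set.mem_inter_iff, Set.mem_Icc, Set.mem_Ici]
              constructor
              · rintro ⟨⟨h4, h5⟩, h6⟩
                exact ⟨h6, h5⟩
              · rintro ⟨h4, h5⟩
                exact ⟨⟨le_trans hv.1.le h4, h5⟩, h4⟩
            rw [h3, measureReal_def, Real.volume_Icc,
              ENNReal.toReal_ofReal (by linarith [hv.2] : (0:ℝ) ≤ M₁ - v)]
            rw [smul_eq_mul, mul_comm]
    have h4 : ∫ v, b v * (M₁ - v) ∂μ₀ = - ∫ v, b v * v ∂μ₀ := by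
      calc ∫ v, b v * (M₁ - v) ∂μ₀ = ∫ v, (b v * M₁ - b v * v) ∂μ₀ := by
            congr 1
            funext v
            ring
        _ = (∫ v, b v * M₁ ∂μ₀) - ∫ v, b v * v ∂μ₀ :=
            integral_sub (hbint.mul_const M₁) hbv
        _ = - ∫ v, b v * v ∂μ₀ := by rw [integral_mul_const, hbmean, zero_mul, zero_sub]
    rw [h1, h4, neg_neg]
  exact stepB.trans (stepB2.trans stepC)
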